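/- The set of derivations of the Leibniz algebra L₂ is a linear subspace of End(V) of dimension 4. -/
import Mathlib


/-- `V = ℂ⁴`. -/
abbrev V : Type := Fin 4 → ℂ

/-- standard basis: `e 0 = e₁`, ..., `e 3 = e₄`. -/
def e (i : Fin 4) : V := Pi.single i 1

/-- Bracket of the Leibniz algebra `L₂`:
`⟦e₁,e₁⟧ = e₃`, `⟦e₁,e₂⟧ = e₄`, `⟦e₂,e₁⟧ = e₃`, `⟦e₃,e₁⟧ = e₄`,
all other basis products zero. -/
def br (x y : V) : V :=
  (x 0 * y 0 + x 1 * y 0) • e 2 + (x 0 * y 1 + x 2 * y 0) • e 3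

/-- A derivation. -/
def IsDer (d : V →ₗ[ℂ] V) : Prop :=
  ∀ x y : V, d (br x y) = br (d x) y + br x (d y)

/-- The general derivation of `L₂`, with parameters `t u v w`. -/
def D (t u v w : ℂ) : V →ₗ[ℂ] V where
  toFun x := ![0, t * x 0 + t * x 1, u * x 0 + (t + u) * x 1 + t * x 2,
               v * x 0 + w * x 1 + (t + u) * x 2 + t * x 3]
  map_add' x y := by funext i; fin_cases i <;> simp <;> ring
  map_smul' c x := by funext i; fin_cases i <;> simp <;> ring

lemma e_apply (i k : Fin 4) : e i k = if k = i then 1 else 0 := Pi.single_apply i 1 k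

lemma br_basis00 : br (e 0) (e 0) = e 2 := by funext k; fin_cases k <;> simp +decide [br, e_apply]
lemma br_basis10 : br (e 1) (e 0) = e 2 := by funext k; fin_cases k <;> simp +decide [br, e_apply]
lemma br_basis01 : br (e 0) (e 1) = e 3 := by funext k; fin_cases k <;> simp +decide [br, e_apply]
lemma br_basis20 : br (e 2) (e 0) = e 3 := by funext k; fin_cases k <;> simp +decide [br, e_apply]
lemma br_basis11 : br (e 1) (e 1) = 0 := by funext k; fin_cases k <;> simp +decide [br, e_apply]

lemma br_val (x y : V) (k : Fin 4) :
    br x y k = ![0, 0, x 0 * y 0 + x 1 * y 0, x 0 * y 1 + x 2 * y 0] k := by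
  fin_cases k <;> simp [br, e, Pi.single_apply]

/-- Every `D t u v w` is a derivation. -/
lemma isDer_D (t u v w : ℂ) : IsDer (D t u v w) := by
  intro x y
  funext k
  have hb : br x y = ![0, 0, x 0 * y 0 + x 1 * y 0, x 0 * y 1 + x 2 * y 0] := funext (br_val x y)
  rw [hb]
  fin_cases k <;> simp [D, br_val, Pi.add_apply] <;> ring

/-- Every derivation is of the form `D t u v w`. -/
lemma der_eq_D (d : V →ₗ[ℂ] V) (hd : IsDer d) :
    d = D (d (e 0) 1) (d (e 0) 2) (d (e 0) 3) (d (e 1) 3) := by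
  have E1 : ∀ k, d (e 2) k = br (d (e 0)) (e 0) k + br (e 0) (d (e 0)) k := by
    intro k; rw [← br_basis00, hd (e 0) (e 0)]; rfl
  have E2 : ∀ k, d (e 3) k = br (d (e 0)) (e 1) k + br (e 0) (d (e 1)) k := by
    intro k; rw [← br_basis01, hd (e 0) (e 1)]; rfl
  have E3 : ∀ k, d (e 2) k = br (d (e 1)) (e 0) k + br (e 1) (d (e 0)) k := by
    intro k; rw [← br_basis10, hd (e 1) (e 0)]; rfl
  have E4 : ∀ k, d (e 3) k = br (d (e 2)) (e 0) k + br (e 2) (d (e 0)) k := by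
    intro k; rw [← br_basis20, hd (e 2) (e 0)]; rfl
  have E5 : (0 : ℂ) = br (d (e 1)) (e 1) 3 + br (e 1) (d (e 1)) 3 := by
    have := congrFun (hd (e 1) (e 1)) 3
    rw [br_basis11, map_zero] at this
    exact this
  have E1_0 := E1 0; have E1_1 := E1 1; have E1_2 := E1 2; have E1_3 := E1 3
  have E2_0 := E2 0; have E2_1 := E2 1; have E2_2 := E2 2; have E2_3 := E2 3
  have E3_2 := E3 2; have E3_3 := E3 3
  have E4_2 := E4 2; have E4_3 := E4 3
  simp +decide only [br, e_apply, Pi.add_apply, Pi.smul_apply, smul_eq_mul, mul_one, mul_zero,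
    add_zero, zero_add, if_true, if_false, ite_true, ite_false, one_mul, zero_mul]
    at E1_0 E1_1 E1_2 E1_3 E2_0 E2_1 E2_2 E2_3 E3_2 E3_3 E4_2 E4_3 E5
  have ha00 : d (e 0) 0 = 0 := by linear_combination -E3_2 + E2_3 - E4_3 + E5
  have ha11 : d (e 1) 1 = d (e 0) 1 := by linear_combination E1_2 - E3_2 + E5 + ha00
  have ha22 : d (e 2) 2 = d (e 0) 1 := by linear_combination E1_2 + 2*ha00
  have ha33 : d (e 3) 3 = d (e 0) 1 := by linear_combination E2_3 + ha00 + ha11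
  have ha32 : d (e 2) 3 = d (e 0) 1 + d (e 0) 2 := by linear_combination E1_3
  have ha21 : d (e 1) 2 = d (e 0) 1 + d (e 0) 2 := by linear_combination E1_3 - E3_3
  have ha23 : d (e 3) 2 = 0 := by linear_combination E2_2 - E5
  have hb : ∀ j : Fin 4, (Pi.basisFun ℂ (Fin 4)) j = e j := by
    intro j; ext k; simp [e, Pi.single_apply, eq_comm]
  refine Module.Basis.ext (Pi.basisFun ℂ (Fin 4)) fun j => ?_
  rw [hb]
  funext k
  fin_cases j <;> fin_cases k <;>
    simp +decide [D, e_apply] <;>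
    first
      | rfl
      | linear_combination ha00
      | linear_combination -E5
      | linear_combination ha11
      | linear_combination ha21
      | linear_combination E1_0
      | linear_combination E1_1
      | linear_combination ha22
      | linear_combination ha32
      | linear_combination E2_0
      | linear_combination E2_1
      | linear_combination ha23
      | linear_combination ha33

/-- The parametrization of derivations, as a linear map `ℂ⁴ → End(V)`. -/
def phi : (Fin 4 → ℂ) →ₗ[ℂ] (V →ₗ[ℂ] V) where
  toFun c := D (c 0) (c 1) (c 2) (c 3)
  map_add' c c' := by
    apply LinearMap.ext; intro x; funext i
    fin_cases i <;> simp [D] <;> ring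
  map_smul' a c := by
    apply LinearMap.ext; intro x; funext i
    fin_cases i <;> simp [D] <;> ring

lemma phi_inj : Function.Injective phi := by
  intro c c' h
  funext i
  have h01 := congrFun (congrArg (fun f => f (e 0)) h) 1
  have h02 := congrFun (congrArg (fun f => f (e 0)) h) 2
  have h03 := congrFun (congrArg (fun f => f (e 0)) h) 3
  have h13 := congrFun (congrArg (fun f => f (e 1)) h) 3
  simp [phi, D, e, Pi.single_apply] at h01 h02 h03 h13
  fin_cases i <;> assumption

theorem derivations_of_L2 :
    ∃ S : Submodule ℂ (V →ₗ[ℂ] V),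
      (S : Set (V →ₗ[ℂ] V)) = {d | IsDer d} ∧ Module.finrank ℂ S = 4 := by
  refine ⟨LinearMap.range phi, ?_, ?_⟩
  · ext d
    simp only [SetLike.mem_coe, LinearMap.mem_range, Set.mem_setOf_eq]
    constructor
    · rintro ⟨c, rfl⟩
      exact isDer_D (c 0) (c 1) (c 2) (c 3)
    · intro hd
      exact ⟨![d (e 0) 1, d (e 0) 2, d (e 0) 3, d (e 1) 3], (der_eq_D d hd).symm⟩
  · rw [LinearMap.finrank_range_of_inj phi_inj]
    simp
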